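/- If n is even and n ≥ 4, then χ'_a(K_n) ≥ n, i.e., the complete graph on an even number n ≥ 4 of vertices admits no acyclic edge-coloring with n−1 colors. -/

import Mathlib

/-- A proper edge-coloring: edges sharing an endpoint get distinct colors. -/
def ProperEdgeColoring {V : Type*} (G : SimpleGraph V) (c : Sym2 V → ℕ) : Prop :=
  ∀ e₁ ∈ G.edgeSet, ∀ e₂ ∈ G.edgeSet, e₁ ≠ e₂ → (∃ v, v ∈ e₁ ∧ v ∈ e₂) → c e₁ ≠ c e₂

/-- The subgraph consisting of edges colored `a` or `b`. -/
def twoColorSubgraph {V : Type*} (G : SimpleGraph V) (c : Sym2 V → ℕ) (a b : ℕ) :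
    SimpleGraph V where
  Adj x y := G.Adj x y ∧ (c s(x, y) = a ∨ c s(x, y) = b)
  symm := by
    constructor
    intro x y h
    refine ⟨h.1.symm, ?_⟩
    rw [Sym2.eq_swap]
    exact h.2
  loopless := by
    constructor
    intro x h
    exact G.ne_of_adj h.1 rfl

/-- An acyclic edge-coloring: proper, and any two color classes induce an acyclic graph. -/
def AcyclicEdgeColoring {V : Type*} (G : SimpleGraph V) (c : Sym2 V → ℕ) : Prop :=
  ProperEdgeColoring G c ∧ ∀ a b : ℕ, (twoColorSubgraph G c a b).IsAcyclic

/-- `G` has an acyclic edge-coloring using colors `0, …, k-1`. -/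
def HasAcyclicEdgeColoring {V : Type*} (G : SimpleGraph V) (k : ℕ) : Prop :=
  ∃ c : Sym2 V → ℕ, AcyclicEdgeColoring G c ∧ ∀ e ∈ G.edgeSet, c e < k

/-- For even `n ≥ 4`, the complete graph `K_n` has no acyclic edge-coloring
with `n - 1` colors; that is, `χ'_a(K_n) ≥ n`. -/
theorem complete_graph_acyclic_index_ge (n : ℕ) (hn : 4 ≤ n) (heven : Even n)
    (c : Sym2 (Fin n) → ℕ)
    (hc : AcyclicEdgeColoring (⊤ : SimpleGraph (Fin n)) c)
    (hk : ∀ e ∈ (⊤ : SimpleGraph (Fin n)).edgeSet, c e < n - 1) : False := by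
  classical
  obtain ⟨hproper, hacyc⟩ := hc
  -- every color a < n-1 appears at every vertex
  have key : ∀ (v : Fin n) (a : ℕ), a < n - 1 → ∃ w : Fin n, w ≠ v ∧ c s(v, w) = a := by
    intro v a ha
    have hne1 : (1 : ℕ) ≤ n := by omega
    set ψ : {w : Fin n // w ≠ v} → Fin (n - 1) := fun w =>
      ⟨c s(v, w.1), hk _ (by simpa [SimpleGraph.mem_edgeSet] using (Ne.symm w.2))⟩ with hψ
    have hinj : Function.Injective ψ := by
      rintro ⟨w₁, h₁⟩ ⟨w₂, h₂⟩ h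
      simp only [hψ, Fin.mk.injEq] at h
      by_contra hne
      have hne' : w₁ ≠ w₂ := by simpa using hne
      have hedge : s(v, w₁) ≠ s(v, w₂) := by
        intro heq
        rcases Sym2.eq_iff.mp heq with ⟨-, h'⟩ | ⟨hv, -⟩
        · exact hne' h'
        · exact h₂ hv.symm
      exact hproper s(v, w₁) (by simpa [SimpleGraph.mem_edgeSet] using (Ne.symm h₁))
        s(v, w₂) (by simpa [SimpleGraph.mem_edgeSet] using (Ne.symm h₂)) hedge
        ⟨v, Sym2.mem_mk_left _ _, Sym2.mem_mk_left _ _⟩ h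
    have hcard : Fintype.card {w : Fin n // w ≠ v} = Fintype.card (Fin (n - 1)) := by
      simp [Fintype.card_subtype_compl]
    have hsurj : Function.Surjective ψ :=
      ((Fintype.bijective_iff_injective_and_card ψ).mpr ⟨hinj, hcard⟩).surjective
    obtain ⟨⟨w, hw⟩, hcw⟩ := hsurj ⟨a, ha⟩
    exact ⟨w, hw, by simpa [hψ, Fin.ext_iff] using congrArg Fin.val hcw⟩
  -- uniqueness of the partner of a given color
  have uniq : ∀ (v w₁ w₂ : Fin n), w₁ ≠ v → w₂ ≠ v → c s(v, w₁) = c s(v, w₂) → w₁ = w₂ := by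
    intro v w₁ w₂ h₁ h₂ hcc
    by_contra hne
    have hedge : s(v, w₁) ≠ s(v, w₂) := by
      intro heq
      rcases Sym2.eq_iff.mp heq with ⟨-, h'⟩ | ⟨hv, -⟩
      · exact hne h'
      · exact h₂ hv.symm
    exact hproper s(v, w₁) (by simpa [SimpleGraph.mem_edgeSet] using (Ne.symm h₁))
      s(v, w₂) (by simpa [SimpleGraph.mem_edgeSet] using (Ne.symm h₂)) hedge
      ⟨v, Sym2.mem_mk_left _ _, Sym2.mem_mk_left _ _⟩ hcc
  -- the color-0 and color-1 partner maps
  choose f hf hfc using fun v => key v 0 (by omega)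
  choose g hg hgc using fun v => key v 1 (by omega)
  have hff : ∀ x, f (f x) = x := by
    intro x
    refine uniq (f x) (f (f x)) x (hf (f x)) (Ne.symm (hf x)) ?_
    rw [hfc (f x), show s(f x, x) = s(x, f x) from Sym2.eq_swap, hfc x]
  have hgg : ∀ x, g (g x) = x := by
    intro x
    refine uniq (g x) (g (g x)) x (hg (g x)) (Ne.symm (hg x)) ?_
    rw [hgc (g x), show s(g x, x) = s(x, g x) from Sym2.eq_swap, hgc x]
  have hfg : ∀ x, f x ≠ g x := by
    intro x h
    have h0 := hfc x
    rw [h, hgc x] at h0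
    exact one_ne_zero h0
  set σ : Fin n → Fin n := fun x => f (g x) with hσ
  set τ : Fin n → Fin n := fun x => g (f x) with hτ
  have hτσ : ∀ x, τ (σ x) = x := by intro x; simp [hσ, hτ, hff, hgg]
  have hστ : ∀ x, σ (τ x) = x := by intro x; simp [hσ, hτ, hff, hgg]
  have hτσi : ∀ (i : ℕ) (x : Fin n), τ^[i] (σ^[i] x) = x := by
    intro i
    induction i with
    | zero => intro x; simp
    | succ i ih =>
      intro x
      rw [Function.iterate_succ_apply' σ, Function.iterate_succ_apply τ, hτσ, ih]
  have hgσ : ∀ (i : ℕ) (x : Fin n), g (σ^[i] x) = τ^[i] (g x) := by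
    intro i
    induction i with
    | zero => intro x; simp
    | succ i ih =>
      intro x
      rw [Function.iterate_succ_apply σ, ih, Function.iterate_succ_apply τ]
  have hfσ : ∀ (i : ℕ) (x : Fin n), f (σ^[i] x) = τ^[i] (f x) := by
    intro i
    induction i with
    | zero => intro x; simp
    | succ i ih =>
      intro x
      rw [Function.iterate_succ_apply σ, ih, Function.iterate_succ_apply τ]
      simp only [hσ, hτ, hff]
  -- parity lemma
  have keyNe : ∀ (x : Fin n) (i : ℕ), σ^[i] x ≠ g x := by
    intro x i h
    rcases Nat.even_or_odd i with ⟨j, hj⟩ | ⟨j, hj⟩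
    · have : g (σ^[j] x) = σ^[j] x := by
        calc g (σ^[j] x) = τ^[j] (g x) := hgσ j x
          _ = τ^[j] (σ^[i] x) := by rw [h]
          _ = τ^[j] (σ^[j] (σ^[j] x)) := by rw [hj, Function.iterate_add_apply]
          _ = σ^[j] x := hτσi j _
      exact hg _ this
    · have hfx : σ^[i+1] x = f x := by
        rw [Function.iterate_succ_apply' σ, h]
        simp [hσ, hgg]
      have : f (σ^[j+1] x) = σ^[j+1] x := by
        calc f (σ^[j+1] x) = τ^[j+1] (f x) := hfσ _ _
          _ = τ^[j+1] (σ^[i+1] x) := by rw [hfx]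
          _ = τ^[j+1] (σ^[j+1] (σ^[j+1] x)) := by
              rw [show i + 1 = (j+1) + (j+1) by omega,
                Function.iterate_add_apply σ (j+1) (j+1) x]
          _ = σ^[j+1] x := hτσi _ _
      exact hf _ this
  -- the two-color subgraph and the bridge
  set v : Fin n := ⟨0, by omega⟩ with hv
  set H : SimpleGraph (Fin n) := twoColorSubgraph (⊤ : SimpleGraph (Fin n)) c 0 1 with hH
  have Hadj : ∀ x y : Fin n, x ≠ y → (c s(x, y) = 0 ∨ c s(x, y) = 1) → H.Adj x y := by
    intro x y hxy hcol
    exact ⟨by simpa using hxy, hcol⟩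
  have hadj_vfv : H.Adj v (f v) := Hadj _ _ (Ne.symm (hf v)) (Or.inl (hfc v))
  have hbridge := SimpleGraph.isAcyclic_iff_forall_adj_isBridge.mp (hacyc 0 1) hadj_vfv
  have hnr : ¬ (H \ SimpleGraph.fromEdgeSet {s(v, f v)}).Reachable v (f v) :=
    (SimpleGraph.isBridge_iff.mp hbridge)
  set H' : SimpleGraph (Fin n) := H \ SimpleGraph.fromEdgeSet {s(v, f v)} with hH'
  have H'adj : ∀ x y : Fin n, x ≠ y → (c s(x, y) = 0 ∨ c s(x, y) = 1) →
      s(x, y) ≠ s(v, f v) → H'.Adj x y := by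
    intro x y hxy hcol hne
    rw [hH', SimpleGraph.sdiff_adj]
    refine ⟨Hadj x y hxy hcol, ?_⟩
    rw [SimpleGraph.fromEdgeSet_adj]
    rintro ⟨hmem, -⟩
    exact hne hmem
  -- g-steps are always available
  have gstep : ∀ x : Fin n, H'.Adj x (g x) := by
    intro x
    refine H'adj x (g x) (Ne.symm (hg x)) (Or.inr (hgc x)) ?_
    intro h
    have := hgc x
    rw [h, hfc v] at this
    exact zero_ne_one this
  -- f-steps avoiding the deleted edge
  have fstep : ∀ x : Fin n, x ≠ v → x ≠ f v → H'.Adj x (f x) := by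
    intro x hxv hxfv
    refine H'adj x (f x) (Ne.symm (hf x)) (Or.inl (hfc x)) ?_
    intro h
    rw [Sym2.eq_iff] at h
    rcases h with ⟨h1, -⟩ | ⟨h1, -⟩
    · exact hxv h1
    · exact hxfv h1
  -- reachability induction
  have reach : ∀ i : ℕ, H'.Reachable v (σ^[i] v) ∨ H'.Reachable v (f v) := by
    intro i
    induction i with
    | zero =>
      refine Or.inl ?_
      rw [Function.iterate_zero_apply]
    | succ i ih =>
      rcases ih with h | h
      · by_cases hcase : g (σ^[i] v) = f v
        · exact Or.inr (h.trans (by rw [← hcase]; exact (gstep _).reachable))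
        · have h1 : H'.Adj (σ^[i] v) (g (σ^[i] v)) := gstep _
          have h2 : H'.Adj (g (σ^[i] v)) (σ^[i+1] v) := by
            have hx1 : g (σ^[i] v) ≠ v := by
              intro hx
              apply keyNe v i
              have := congrArg g hx
              rwa [hgg] at this
            have := fstep (g (σ^[i] v)) hx1 hcase
            rwa [show f (g (σ^[i] v)) = σ^[i+1] v by
              rw [Function.iterate_succ_apply' σ]] at this
          exact Or.inl ((h.trans h1.reachable).trans h2.reachable)
      · exact Or.inr h
  -- σ has a period at v
  have hσinj : Function.Injective σ := Function.LeftInverse.injective hτσ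
  have hper : ∃ k : ℕ, 0 < k ∧ σ^[k] v = v := by
    obtain ⟨a, b, hne, hab⟩ := Finite.exists_ne_map_eq_of_infinite (fun i : ℕ => σ^[i] v)
    rcases Nat.lt_or_ge a b with hlt | hge
    · refine ⟨b - a, by omega, ?_⟩
      have : σ^[a] (σ^[b - a] v) = σ^[a] v := by
        rw [← Function.iterate_add_apply, show a + (b - a) = b by omega, hab]
      exact Function.Injective.iterate hσinj a this
    · have hlt : b < a := by omega
      refine ⟨a - b, by omega, ?_⟩
      have : σ^[b] (σ^[a - b] v) = σ^[b] v := by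
        rw [← Function.iterate_add_apply, show b + (a - b) = a by omega, ← hab]
      exact Function.Injective.iterate hσinj b this
  obtain ⟨k, hk0, hkper⟩ := hper
  -- σ^[k-1] v = g (f v)
  have hlast : σ^[k - 1] v = g (f v) := by
    have hk1 : k - 1 + 1 = k := by omega
    rw [← hk1, Function.iterate_succ_apply' σ] at hkper
    have h2 : σ (g (f v)) = v := by simp [hσ, hgg, hff]
    exact hσinj (hkper.trans h2.symm)
  have : H'.Reachable v (f v) := by
    rcases reach (k - 1) with h | h
    · refine h.trans ?_
      rw [hlast]
      have := (gstep (g (f v))).reachable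
      rwa [hgg] at this
    · exact h
  exact hnr this
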